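/- Let the setting be type A_N (N ≥ 1). Let (i_t,k_t), 1 ≤ t ≤ T, be a snake in X and let D be the associated skew diagram, D = {(s,t) : 1 ≤ t ≤ T, t − k_t/2 − (i_t−1)/2 ≤ s ≤ t − k_t/2 + (i_t−1)/2}. Then there is a bijection between the set P̄_{(i_t,k_t)} of non-overlapping tuples of paths and the set of type A skew tableaux of shape D, under which a tuple (p_1,…,p_T) corresponds to a tableau 𝒯 satisfying ∏_{t=1}^T m(p_t) = M(𝒯) in the free abelian group M. -/

import Mathlib

namespace Paper

/-- The ambient setting: type `A N` (with `N ≥ 1`) or type `B N ε`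
(with `N ≥ 2` and `0 < ε < 1/2`). -/
inductive Setting where
  | A (N : ℕ)
  | B (N : ℕ) (ε : ℝ)

namespace Setting

/-- The rank `N`. -/
def N : Setting → ℕ
  | A n => n
  | B n _ => n

/-- Validity of the parameters of the setting. -/
def valid : Setting → Prop
  | A n => 1 ≤ n
  | B n ε => 2 ≤ n ∧ 0 < ε ∧ ε < 1 / 2

end Setting

/-- The numbers `r_i` : in type A all equal `1`; in type B, `r_N = 1` and `r_i = 2` for `i < N`. -/
def rr : Setting → ℕ → ℕ
  | .A _, _ => 1
  | .B n _, j => if j = n then 1 else 2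

/-- The set `X` in type `A_N`. -/
def XA (n : ℕ) : Set (ℕ × ℤ) :=
  {ik | 1 ≤ ik.1 ∧ ik.1 ≤ n ∧ ((ik.1 : ℤ) - ik.2) % 2 = 1}

/-- The set `X` in type `B_N`. -/
def XB (n : ℕ) : Set (ℕ × ℤ) :=
  {ik | (ik.1 = n ∧ ik.2 % 2 = 1) ∨ (1 ≤ ik.1 ∧ ik.1 < n ∧ ik.2 % 2 = 0)}

/-- The set `X ⊆ I × ℤ`. -/
def X : Setting → Set (ℕ × ℤ)
  | .A n => XA n
  | .B n _ => XB n

/-- The set `W = {(i,k) : (i, k - r_i) ∈ X}`. -/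
def W (S : Setting) : Set (ℕ × ℤ) :=
  {ik | (ik.1, ik.2 - (rr S ik.1 : ℤ)) ∈ X S}

/-- The `r`-th point of a path (a finite list of points of the plane). -/
def pt (p : List (ℝ × ℝ)) (r : ℕ) : ℝ × ℝ := p.getD r (0, 0)

/-- The set of paths `𝒫_{i,k}` in type `A_N`. -/
def pathsA (n : ℕ) (i : ℕ) (k : ℤ) : Set (List (ℝ × ℝ)) :=
  {p | p.length = n + 2 ∧
    (∀ r, r < n + 2 → (pt p r).1 = (r : ℝ)) ∧
    (pt p 0).2 = (i : ℝ) + (k : ℝ) ∧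
    (pt p (n + 1)).2 = (n : ℝ) + 1 - (i : ℝ) + (k : ℝ) ∧
    (∀ r, r ≤ n → (pt p (r + 1)).2 - (pt p r).2 = 1 ∨ (pt p (r + 1)).2 - (pt p r).2 = -1)}

/-- The set of paths `𝒫_{N,ℓ}` in type `B_N`. -/
def pathsBspin (n : ℕ) (ε : ℝ) (l : ℤ) : Set (List (ℝ × ℝ)) :=
  {p | p.length = n + 1 ∧
    (if l % 4 = 3 then ∀ r, r < n → (pt p r).1 = 2 * (r : ℝ)
     else ∀ r, r < n → (pt p r).1 = 4 * (n : ℝ) - 2 - 2 * (r : ℝ)) ∧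
    (pt p n).1 = 2 * (n : ℝ) - 1 ∧
    (pt p 0).2 = (l : ℝ) + 2 * (n : ℝ) - 1 ∧
    (∀ r, r + 2 ≤ n → (pt p (r + 1)).2 - (pt p r).2 = 2 ∨ (pt p (r + 1)).2 - (pt p r).2 = -2) ∧
    ((pt p n).2 - (pt p (n - 1)).2 = 1 + ε ∨ (pt p n).2 - (pt p (n - 1)).2 = -(1 + ε))}

/-- The set of paths `𝒫_{i,k}` in type `B_N`. -/
def pathsB (n : ℕ) (ε : ℝ) (i : ℕ) (k : ℤ) : Set (List (ℝ × ℝ)) :=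
  if i = n then pathsBspin n ε k
  else {p | ∃ a b : List (ℝ × ℝ),
    a ∈ pathsBspin n ε (k - (2 * (n : ℤ) - 2 * (i : ℤ) - 1)) ∧
    b ∈ pathsBspin n ε (k + (2 * (n : ℤ) - 2 * (i : ℤ) - 1)) ∧
    p = a ++ b.reverse ∧
    (pt a n).1 = (pt b n).1 ∧ 0 < (pt a n).2 - (pt b n).2}

/-- The set of paths `𝒫_{i,k}`. -/
def P : Setting → ℕ → ℤ → Set (List (ℝ × ℝ))
  | .A n => pathsA n
  | .B n ε => pathsB n ε

/-- The map `ι : X → ℤ × ℤ` of type `B_N`. -/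
def iotaB (n : ℕ) (ik : ℕ × ℤ) : ℤ × ℤ :=
  if ik.1 = n then (2 * (n : ℤ) - 1, ik.2)
  else if (2 * (n : ℤ) + ik.2 - 2 * (ik.1 : ℤ)) % 4 = 2 then (2 * (ik.1 : ℤ), ik.2)
  else (4 * (n : ℤ) - 2 - 2 * (ik.1 : ℤ), ik.2)

/-- The corners of a path: `Cp S p true` is the set `C_{p,+}` of upper corners, and
`Cp S p false` is the set `C_{p,-}` of lower corners. -/
def Cp (S : Setting) (p : List (ℝ × ℝ)) (up : Bool) : Set (ℕ × ℤ) :=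
  match S with
  | .A n =>
    {jl | 1 ≤ jl.1 ∧ jl.1 ≤ n ∧
      pt p jl.1 = ((jl.1 : ℝ), (jl.2 : ℝ)) ∧
      (pt p (jl.1 - 1)).2 = (jl.2 : ℝ) + (if up then 1 else -1) ∧
      (pt p (jl.1 + 1)).2 = (jl.2 : ℝ) + (if up then 1 else -1)}
  | .B n ε =>
    {jl | jl ∈ XB n ∧
      ((∃ r : ℕ, 1 ≤ r ∧ r + 1 < p.length ∧
          pt p r = (((iotaB n jl).1 : ℝ), ((iotaB n jl).2 : ℝ)) ∧
          (iotaB n jl).1 ≠ 0 ∧ (iotaB n jl).1 ≠ 2 * (n : ℤ) - 1 ∧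
          (iotaB n jl).1 ≠ 4 * (n : ℤ) - 2 ∧
          (if up then (pt p r).2 < (pt p (r - 1)).2 ∧ (pt p r).2 < (pt p (r + 1)).2
           else (pt p (r - 1)).2 < (pt p r).2 ∧ (pt p (r + 1)).2 < (pt p r).2))
       ∨ (jl.1 = n ∧
          (if up then (2 * (n : ℝ) - 1, (jl.2 : ℝ) - ε) ∈ p ∧ (2 * (n : ℝ) - 1, (jl.2 : ℝ) + ε) ∉ p
           else (2 * (n : ℝ) - 1, (jl.2 : ℝ) + ε) ∈ p ∧ (2 * (n : ℝ) - 1, (jl.2 : ℝ) - ε) ∉ p)))}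

/-- `p'` is obtained from `p` by replacing the point `q` by the point `q'`. -/
def Replace1 (p p' : List (ℝ × ℝ)) (q q' : ℝ × ℝ) : Prop :=
  ∃ r : ℕ, r < p.length ∧ pt p r = q ∧ p'.length = p.length ∧ pt p' r = q' ∧
    ∀ s, s < p.length → s ≠ r → pt p' s = pt p s

/-- `p'` is obtained from `p` by replacing the point `q1` by `q1'` and the point `q2` by `q2'`. -/
def Replace2 (p p' : List (ℝ × ℝ)) (q1 q1' q2 q2' : ℝ × ℝ) : Prop :=
  ∃ r s : ℕ, r < p.length ∧ s < p.length ∧ r ≠ s ∧ pt p r = q1 ∧ pt p s = q2 ∧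
    p'.length = p.length ∧ pt p' r = q1' ∧ pt p' s = q2' ∧
    ∀ u, u < p.length → u ≠ r → u ≠ s → pt p' u = pt p u

/-- The path `p` can be lowered at `(j, l)`: `(j, l - r_j) ∈ C_{p,+}` and
`(j, l + r_j) ∉ C_{p,+}`. -/
def CanLower (S : Setting) (p : List (ℝ × ℝ)) (j : ℕ) (l : ℤ) : Prop :=
  (j, l - (rr S j : ℤ)) ∈ Cp S p true ∧ (j, l + (rr S j : ℤ)) ∉ Cp S p true

/-- `p'` is the result of the lowering move at `(j,l)` applied to the path `p ∈ 𝒫_{i,k}`;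
written `p' = p 𝒜_{j,l}⁻¹`. -/
def LoweredTo (S : Setting) (i : ℕ) (k : ℤ) (j : ℕ) (l : ℤ)
    (p p' : List (ℝ × ℝ)) : Prop :=
  p ∈ P S i k ∧ p' ∈ P S i k ∧ CanLower S p j l ∧
  (match S with
   | .A _ => Replace1 p p' ((j : ℝ), (l : ℝ) - 1) ((j : ℝ), (l : ℝ) + 1)
   | .B n ε =>
     if j = n then
       Replace1 p p' (2 * (n : ℝ) - 1, (l : ℝ) - 1 - ε) (2 * (n : ℝ) - 1, (l : ℝ) + 1 + ε)
     else if j = n - 1 then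
       Replace2 p p'
         (((iotaB n (j, l - 2)).1 : ℝ), (l : ℝ) - 2) (((iotaB n (j, l - 2)).1 : ℝ), (l : ℝ) + 2)
         (2 * (n : ℝ) - 1, (l : ℝ) - 1 + ε) (2 * (n : ℝ) - 1, (l : ℝ) + 1 - ε)
     else
       Replace1 p p'
         (((iotaB n (j, l - 2)).1 : ℝ), (l : ℝ) - 2) (((iotaB n (j, l - 2)).1 : ℝ), (l : ℝ) + 2))

/-- The path `p` can be raised at `(j,l)`: it is of the form `p' 𝒜_{j,l}⁻¹`. -/
def CanRaise (S : Setting) (i : ℕ) (k : ℤ) (p : List (ℝ × ℝ)) (j : ℕ) (l : ℤ) : Prop :=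
  ∃ p', LoweredTo S i k j l p' p

/-- The monomial group `ℳ`, realised as exponent functions: the free abelian group on the
symbols `Y_{i,k}`, `(i,k) ∈ X`, is identified with finitely supported functions `(ℕ × ℤ) → ℤ`,
written additively. -/
def Y (x : ℕ × ℤ) : (ℕ × ℤ) → ℤ := fun z => if z = x then 1 else 0

noncomputable def ind (s : Prop) : ℤ := @ite ℤ s (Classical.propDecidable s) 1 0

/-- The monomial `m(p)` of a path: `∏ Y_{j,l}` over upper corners times `∏ Y_{j,l}⁻¹`
over lower corners. -/
noncomputable def mon (S : Setting) (p : List (ℝ × ℝ)) : (ℕ × ℤ) → ℤ :=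
  fun x => ind (x ∈ Cp S p true) - ind (x ∈ Cp S p false)

/-- The monomials `A_{j,l}`, with the conventions `Y_{0,·} = Y_{N+1,·} = 1`. -/
def Amon (S : Setting) (j : ℕ) (l : ℤ) : (ℕ × ℤ) → ℤ :=
  match S with
  | .A n =>
      Y (j, l + 1) + Y (j, l - 1) - (if j = 1 then 0 else Y (j - 1, l))
        - (if j = n then 0 else Y (j + 1, l))
  | .B n _ =>
      if j = n then Y (n, l + 1) + Y (n, l - 1) - Y (n - 1, l)
      else if j = n - 1 then
        Y (n - 1, l + 2) + Y (n - 1, l - 2) - (if j = 1 then 0 else Y (n - 2, l))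
          - Y (n, l + 1) - Y (n, l - 1)
      else
        Y (j, l + 2) + Y (j, l - 2) - (if j = 1 then 0 else Y (j - 1, l)) - Y (j + 1, l)

/-- A monomial is dominant iff all its exponents are nonnegative. -/
def Dominant (m : (ℕ × ℤ) → ℤ) : Prop := ∀ x, 0 ≤ m x

/-- A monomial is anti-dominant iff all its exponents are nonpositive. -/
def AntiDominant (m : (ℕ × ℤ) → ℤ) : Prop := ∀ x, m x ≤ 0

/-- `(i',k')` is in snake position with respect to `(i,k)`. -/
def SnakePos : Setting → ℕ × ℤ → ℕ × ℤ → Prop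
  | .A _, ik, ik' => |(ik'.1 : ℤ) - (ik.1 : ℤ)| + 2 ≤ ik'.2 - ik.2
  | .B n _, ik, ik' =>
      if ik.1 = n ∧ ik'.1 = n then
        2 ≤ ik'.2 - ik.2 ∧ (ik'.2 - ik.2) % 4 = 2
      else if ik.1 = n ∨ ik'.1 = n then
        2 * |(ik'.1 : ℤ) - (ik.1 : ℤ)| + 3 ≤ ik'.2 - ik.2 ∧
          (ik'.2 - ik.2) % 4 = (2 * |(ik'.1 : ℤ) - (ik.1 : ℤ)| - 1) % 4
      else
        2 * |(ik'.1 : ℤ) - (ik.1 : ℤ)| + 4 ≤ ik'.2 - ik.2 ∧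
          (ik'.2 - ik.2) % 4 = (2 * |(ik'.1 : ℤ) - (ik.1 : ℤ)|) % 4

/-- A snake: a sequence of points of `X`, each in snake position w.r.t. the previous one. -/
def IsSnake (S : Setting) {T : ℕ} (w : Fin T → ℕ × ℤ) : Prop :=
  (∀ t, w t ∈ X S) ∧
  ∀ (t : Fin T) (h : (t : ℕ) + 1 < T), SnakePos S (w t) (w ⟨(t : ℕ) + 1, h⟩)

/-- `p` is strictly above `p'`. -/
def StrictlyAbove (p p' : List (ℝ × ℝ)) : Prop :=
  ∀ a ∈ p, ∀ b ∈ p', a.1 = b.1 → a.2 < b.2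

/-- A tuple of paths is non-overlapping. -/
def NonOverlapping {T : ℕ} (ps : Fin T → List (ℝ × ℝ)) : Prop :=
  ∀ s t : Fin T, s < t → StrictlyAbove (ps s) (ps t)

/-- The set `𝒫̄` of non-overlapping tuples of paths attached to a snake. -/
def PBar (S : Setting) {T : ℕ} (w : Fin T → ℕ × ℤ) : Set (Fin T → List (ℝ × ℝ)) :=
  {ps | (∀ t, ps t ∈ P S (w t).1 (w t).2) ∧ NonOverlapping ps}

/-- The product `∏_t m(p_t)` of the monomials of a tuple of paths. -/
noncomputable def tmon (S : Setting) {T : ℕ} (ps : Fin T → List (ℝ × ℝ)) : (ℕ × ℤ) → ℤ :=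
  ∑ t, mon S (ps t)

/-- Lowering move at `jl` on a tuple of paths: one component is lowered, the others
are unchanged. -/
def TLoweredTo (S : Setting) {T : ℕ} (w : Fin T → ℕ × ℤ) (jl : ℕ × ℤ)
    (ps ps' : Fin T → List (ℝ × ℝ)) : Prop :=
  ∃ t, LoweredTo S (w t).1 (w t).2 jl.1 jl.2 (ps t) (ps' t) ∧ ∀ s, s ≠ t → ps' s = ps s

/-- Sequences of raising/lowering moves on a single path; the list records, for each move,
whether it was a lowering move (`true`) or a raising move (`false`), and its site. -/
inductive MoveSeq (S : Setting) (i : ℕ) (k : ℤ) :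
    List (ℝ × ℝ) → List (ℝ × ℝ) → List (Bool × (ℕ × ℤ)) → Prop where
  | nil (p : List (ℝ × ℝ)) : MoveSeq S i k p p []
  | lower {p q r : List (ℝ × ℝ)} {jl : ℕ × ℤ} {ms : List (Bool × (ℕ × ℤ))} :
      jl ∈ W S → LoweredTo S i k jl.1 jl.2 p q → MoveSeq S i k q r ms →
      MoveSeq S i k p r ((true, jl) :: ms)
  | raise {p q r : List (ℝ × ℝ)} {jl : ℕ × ℤ} {ms : List (Bool × (ℕ × ℤ))} :
      jl ∈ W S → LoweredTo S i k jl.1 jl.2 q p → MoveSeq S i k q r ms →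
      MoveSeq S i k p r ((false, jl) :: ms)

/-- Sequences of raising/lowering moves on tuples of paths, all of whose intermediate
tuples are non-overlapping. -/
inductive TMoveSeq (S : Setting) {T : ℕ} (w : Fin T → ℕ × ℤ) :
    (Fin T → List (ℝ × ℝ)) → (Fin T → List (ℝ × ℝ)) → List (Bool × (ℕ × ℤ)) → Prop where
  | nil (ps : Fin T → List (ℝ × ℝ)) : TMoveSeq S w ps ps []
  | lower {ps qs rs : Fin T → List (ℝ × ℝ)} {jl : ℕ × ℤ} {ms : List (Bool × (ℕ × ℤ))} :
      jl ∈ W S → TLoweredTo S w jl ps qs → NonOverlapping qs →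
      TMoveSeq S w qs rs ms → TMoveSeq S w ps rs ((true, jl) :: ms)
  | raise {ps qs rs : Fin T → List (ℝ × ℝ)} {jl : ℕ × ℤ} {ms : List (Bool × (ℕ × ℤ))} :
      jl ∈ W S → TLoweredTo S w jl qs ps → NonOverlapping qs →
      TMoveSeq S w qs rs ms → TMoveSeq S w ps rs ((false, jl) :: ms)

/-- Sequences of lowering moves on tuples of paths, all of whose intermediate tuples
are non-overlapping; the list records the sites, in order. -/
inductive TLowerSeq (S : Setting) {T : ℕ} (w : Fin T → ℕ × ℤ) :
    (Fin T → List (ℝ × ℝ)) → (Fin T → List (ℝ × ℝ)) → List (ℕ × ℤ) → Prop where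
  | nil (ps : Fin T → List (ℝ × ℝ)) : TLowerSeq S w ps ps []
  | cons {ps qs rs : Fin T → List (ℝ × ℝ)} {jl : ℕ × ℤ} {ms : List (ℕ × ℤ)} :
      jl ∈ W S → TLoweredTo S w jl ps qs → NonOverlapping qs →
      TLowerSeq S w qs rs ms → TLowerSeq S w ps rs (jl :: ms)

/-- Weak order on paths with the same x-coordinates: `p` is weakly above `p'`. -/
def WeaklyAbove (p p' : List (ℝ × ℝ)) : Prop :=
  p.length = p'.length ∧ ∀ r, r < p.length → (pt p r).2 ≤ (pt p' r).2

/-- `p` is weakly below `p'`. -/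
def WeaklyBelow (p p' : List (ℝ × ℝ)) : Prop :=
  p.length = p'.length ∧ ∀ r, r < p.length → (pt p' r).2 ≤ (pt p r).2

/-- The path `top(p, p')`. -/
def topPath (p p' : List (ℝ × ℝ)) : List (ℝ × ℝ) :=
  List.zipWith (fun a b => (a.1, min a.2 b.2)) p p'

/-- The distinguished point contained in the highest path `p⁺_{i,k}`. -/
def highPoint : Setting → ℕ → ℤ → ℝ × ℝ
  | .A _, i, k => ((i : ℝ), (k : ℝ))
  | .B n ε, i, k =>
      if i = n then (2 * (n : ℝ) - 1, (k : ℝ) - ε)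
      else (((iotaB n (i, k)).1 : ℝ), ((iotaB n (i, k)).2 : ℝ))

/-- The distinguished point contained in the lowest path `p⁻_{i,k}`. -/
def lowPoint : Setting → ℕ → ℤ → ℝ × ℝ
  | .A n, i, k => ((n : ℝ) + 1 - (i : ℝ), (k : ℝ) + (n : ℝ) + 1)
  | .B n ε, i, k =>
      if i = n then (2 * (n : ℝ) - 1, (k : ℝ) + 4 * (n : ℝ) - 2 + ε)
      else (((iotaB n (i, k + 4 * (n : ℤ) - 2)).1 : ℝ),
            ((iotaB n (i, k + 4 * (n : ℤ) - 2)).2 : ℝ))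

/-- The highest path `p⁺_{i,k}` : the path of `𝒫_{i,k}` with no lower corners. -/
noncomputable def highestPath (S : Setting) (i : ℕ) (k : ℤ) : List (ℝ × ℝ) :=
  Classical.epsilon fun p => p ∈ P S i k ∧ Cp S p false = ∅

/-- The lowest path `p⁻_{i,k}` : the path of `𝒫_{i,k}` with no upper corners. -/
noncomputable def lowestPath (S : Setting) (i : ℕ) (k : ℤ) : List (ℝ × ℝ) :=
  Classical.epsilon fun p => p ∈ P S i k ∧ Cp S p true = ∅




/-- `r^∨`: `1` in type A, `2` in type B. -/
def rd : Setting → ℤ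
  | .A _ => 1
  | .B _ _ => 2

/-- The subset `X' ⊆ X`: all of `X` in type A; in type B, the points `(i,k)` with
`i < N` and `2i - k ≡ 2 (mod 4)`. -/
def Xp : Setting → Set (ℕ × ℤ)
  | .A n => XA n
  | .B n _ => {ik | ik ∈ XB n ∧ ik.1 < n ∧ (2 * (ik.1 : ℤ) - ik.2) % 4 = 2}

/-- A skew diagram: a finite subset of `ℤ × ℤ_{>0}` such that (1) if nonempty it has a box
in column 1, and (2) if `(i,j)` is not a box then either nothing weakly to its lower-right
is a box, or nothing weakly to its upper-left is a box. -/
def IsSkewDiagram (D : Set (ℤ × ℤ)) : Prop :=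
  D.Finite ∧ (∀ q ∈ D, 0 < q.2) ∧
  (D.Nonempty → ∃ i : ℤ, (i, 1) ∈ D) ∧
  (∀ i j : ℤ, 0 < j → (i, j) ∉ D →
    (∀ i' j' : ℤ, i ≤ i' → j ≤ j' → (i', j') ∉ D) ∨
    (∀ i' j' : ℤ, i' ≤ i → j' ≤ j → (i', j') ∉ D))

/-- The skew diagram attached to a snake `(i_t, k_t)`, `1 ≤ t ≤ T` (here indexed by `Fin T`):
the boxes `(s,t)` with `1 ≤ t ≤ T` and
`t - k_t/(2 r^∨) - (i_t - 1)/2 ≤ s ≤ t - k_t/(2 r^∨) + (i_t - 1)/2`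
(the inequalities are stated multiplied through by `2 r^∨ > 0`). -/
def diagOf (S : Setting) {T : ℕ} (w : Fin T → ℕ × ℤ) : Set (ℤ × ℤ) :=
  {q | ∃ t : Fin T, q.2 = (t : ℤ) + 1 ∧
    2 * rd S * ((t : ℤ) + 1) - (w t).2 - rd S * (((w t).1 : ℤ) - 1) ≤ 2 * rd S * q.1 ∧
    2 * rd S * q.1 ≤ 2 * rd S * ((t : ℤ) + 1) - (w t).2 + rd S * (((w t).1 : ℤ) - 1)}

/-- The maximal number of boxes allowed in a column: `N` in type A, `N - 1` in type B. -/
def colBound : Setting → ℕ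
  | .A n => n
  | .B n _ => n - 1

/-- Type A skew tableaux of shape `D` (encoded as functions `ℤ × ℤ → ℕ` vanishing off `D`):
entries in the alphabet `{1, …, N+1}`, weakly increasing along rows, strictly increasing
down columns. -/
def TabA (n : ℕ) (D : Set (ℤ × ℤ)) : Set (ℤ × ℤ → ℕ) :=
  {f | (∀ q ∈ D, 1 ≤ f q ∧ f q ≤ n + 1) ∧ (∀ q ∉ D, f q = 0) ∧
    (∀ i j : ℤ, (i, j) ∈ D → (i, j + 1) ∈ D → f (i, j) ≤ f (i, j + 1)) ∧
    (∀ i j : ℤ, (i, j) ∈ D → (i + 1, j) ∈ D → f (i, j) < f (i + 1, j))}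

/-- The type A box monomial `⟦a⟧_k = Y_{a-1, a+k}⁻¹ Y_{a, a-1+k}`, with the conventions
`Y_{0,·} = Y_{N+1,·} = 1`. -/
def boxA (n : ℕ) (a : ℕ) (k : ℤ) : (ℕ × ℤ) → ℤ :=
  (if a = n + 1 then 0 else Y (a, (a : ℤ) - 1 + k)) -
    (if a = 1 then 0 else Y (a - 1, (a : ℤ) + k))

/-- The monomial `M(𝒯)` of a type A skew tableau. -/
noncomputable def MtabA (n : ℕ) (D : Set (ℤ × ℤ)) (f : ℤ × ℤ → ℕ) : (ℕ × ℤ) → ℤ :=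
  ∑ᶠ q ∈ D, boxA n (f q) (2 * (q.2 - q.1))

/-- The type B alphabet `{1, …, N, 0, N̄, …, 1̄}`, encoded in `ℤ` with the barred letter
`ā` encoded as `-a`. -/
def alphabetB (n : ℕ) : Set ℤ :=
  {a | (1 ≤ a ∧ a ≤ (n : ℤ)) ∨ a = 0 ∨ (-(n : ℤ) ≤ a ∧ a ≤ -1)}

/-- The position of a type B letter in the alphabetical order
`1 < 2 < ⋯ < N < 0 < N̄ < ⋯ < 2̄ < 1̄`. -/
def ordB (n : ℕ) (a : ℤ) : ℤ :=
  if 1 ≤ a then a else if a = 0 then (n : ℤ) + 1 else 2 * (n : ℤ) + 2 + a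

/-- Type B skew tableaux of shape `D` (encoded as functions `ℤ × ℤ → ℤ` vanishing off `D`). -/
def TabB (n : ℕ) (D : Set (ℤ × ℤ)) : Set (ℤ × ℤ → ℤ) :=
  {f | (∀ q ∈ D, f q ∈ alphabetB n) ∧ (∀ q ∉ D, f q = 0) ∧
    (∀ i j : ℤ, (i, j) ∈ D → (i, j + 1) ∈ D →
      ordB n (f (i, j)) ≤ ordB n (f (i, j + 1)) ∧ ¬(f (i, j) = 0 ∧ f (i, j + 1) = 0)) ∧
    (∀ i j : ℤ, (i, j) ∈ D → (i + 1, j) ∈ D →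
      ordB n (f (i, j)) < ordB n (f (i + 1, j)) ∨ (f (i, j) = 0 ∧ f (i + 1, j) = 0))}

/-- The type B box monomials `⟦a⟧_k`, with the convention `Y_{0,·} = 1`. -/
def boxB (n : ℕ) (a : ℤ) (k : ℤ) : (ℕ × ℤ) → ℤ :=
  if a = 0 then Y (n, 2 * (n : ℤ) - 3 + k) - Y (n, 2 * (n : ℤ) + 1 + k)
  else if a = (n : ℤ) then
    Y (n, 2 * (n : ℤ) - 3 + k) + Y (n, 2 * (n : ℤ) - 1 + k) - Y (n - 1, 2 * (n : ℤ) + k)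
  else if a = -(n : ℤ) then
    Y (n - 1, 2 * (n : ℤ) - 2 + k) - Y (n, 2 * (n : ℤ) - 1 + k) - Y (n, 2 * (n : ℤ) + 1 + k)
  else if 1 ≤ a then
    Y (a.toNat, 2 * a - 2 + k) - (if a = 1 then 0 else Y (a.toNat - 1, 2 * a + k))
  else
    (if a = -1 then 0 else Y ((-a).toNat - 1, 4 * (n : ℤ) - 2 - 2 * (-a) + k)) -
      Y ((-a).toNat, 4 * (n : ℤ) - 2 * (-a) + k)

/-- The monomial `M(𝒯)` of a type B skew tableau. -/
noncomputable def MtabB (n : ℕ) (D : Set (ℤ × ℤ)) (f : ℤ × ℤ → ℤ) : (ℕ × ℤ) → ℤ :=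
  ∑ᶠ q ∈ D, boxB n (f q) (4 * (q.2 - q.1))



namespace A15

open Finset

/-- Down-step predicate: the step from `a-1` to `a` goes down. -/
def dstep (p : List (ℝ × ℝ)) (a : ℕ) : Prop := (pt p a).2 - (pt p (a-1)).2 = -1

open Classical in
/-- Number of down steps among the first `a` steps. -/
noncomputable def cA (p : List (ℝ × ℝ)) (a : ℕ) : ℕ :=
  ((Finset.Icc 1 a).filter fun b => dstep p b).card

lemma cA_zero (p : List (ℝ × ℝ)) : cA p 0 = 0 := by
  simp [cA]

open Classical in
lemma cA_succ (p : List (ℝ × ℝ)) (a : ℕ) :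
    cA p (a + 1) = cA p a + if dstep p (a + 1) then 1 else 0 := by
  classical
  have h1 : Finset.Icc 1 (a + 1) = insert (a + 1) (Finset.Icc 1 a) := by
    ext b
    simp [Finset.mem_Icc, Nat.lt_succ_iff]
    omega
  rw [cA, cA, h1, Finset.filter_insert]
  split <;> simp [Finset.card_insert_of_notMem, Finset.mem_filter]

lemma cA_mono (p : List (ℝ × ℝ)) {a b : ℕ} (h : a ≤ b) : cA p a ≤ cA p b := by
  classical
  apply Finset.card_le_card
  apply Finset.filter_subset_filter
  exact Finset.Icc_subset_Icc le_rfl h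

section PathA

variable {n i : ℕ} {k : ℤ} {p : List (ℝ × ℝ)}

lemma step_cases (hp : p ∈ pathsA n i k) {a : ℕ} (ha : a ≤ n) :
    (pt p (a+1)).2 - (pt p a).2 = 1 ∨ (pt p (a+1)).2 - (pt p a).2 = -1 :=
  hp.2.2.2.2 a ha

lemma not_dstep_up (hp : p ∈ pathsA n i k) {a : ℕ} (ha : a ≤ n)
    (hd : ¬ dstep p (a+1)) : (pt p (a+1)).2 = (pt p a).2 + 1 := by
  rcases step_cases hp ha with h | h
  · linarith
  · exact absurd (by simpa [dstep] using h) hd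

lemma dstep_down {a : ℕ} (hd : dstep p (a+1)) :
    (pt p (a+1)).2 = (pt p a).2 - 1 := by
  have := hd
  simp only [dstep, Nat.add_sub_cancel] at this
  linarith

lemma yv_eq (hp : p ∈ pathsA n i k) :
    ∀ a, a ≤ n + 1 → (pt p a).2 = (i : ℝ) + (k : ℝ) + (a : ℝ) - 2 * (cA p a : ℝ) := by
  intro a
  induction a with
  | zero => intro _; simp [cA_zero, hp.2.2.1]
  | succ a ih =>
    intro ha
    have ha' : a ≤ n := by omega
    have hya := ih (by omega)
    rw [cA_succ]
    by_cases hd : dstep p (a+1)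
    · rw [dstep_down hd, hya]
      simp [hd]
      push_cast
      ring
    · rw [not_dstep_up hp ha' hd, hya]
      simp [hd]
      push_cast
      ring

lemma cA_final (hp : p ∈ pathsA n i k) : cA p (n + 1) = i := by
  have h1 := yv_eq hp (n+1) le_rfl
  have h2 := hp.2.2.2.1
  rw [h2] at h1
  have : (2 : ℝ) * (cA p (n+1) : ℝ) = 2 * (i : ℝ) := by push_cast at h1 ⊢; linarith
  have := mul_left_cancel₀ (two_ne_zero (α := ℝ)) this
  exact_mod_cast this

lemma cA_le (hp : p ∈ pathsA n i k) {a : ℕ} (ha : a ≤ n + 1) : cA p a ≤ i :=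
  (cA_final hp) ▸ cA_mono p ha

/-- The `m`-th down step of a path. -/
noncomputable def entA (p : List (ℝ × ℝ)) (m : ℕ) : ℕ := sInf {a | m ≤ cA p a}

lemma entA_le_iff (p : List (ℝ × ℝ)) {m a : ℕ} (hne : (∃ b, m ≤ cA p b)) :
    entA p m ≤ a ↔ m ≤ cA p a := by
  constructor
  · intro h
    have hmem : m ≤ cA p (entA p m) := Nat.sInf_mem hne
    exact hmem.trans (cA_mono p h)
  · intro h
    exact Nat.sInf_le h

lemma entA_exists (hp : p ∈ pathsA n i k) {m : ℕ} (hm : m ≤ i) :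
    ∃ b, m ≤ cA p b := ⟨n + 1, (cA_final hp) ▸ hm⟩

lemma entA_le (hp : p ∈ pathsA n i k) {m : ℕ} (hm : m ≤ i) : entA p m ≤ n + 1 :=
  (entA_le_iff p (entA_exists hp hm)).2 ((cA_final hp) ▸ hm)

lemma entA_pos (hp : p ∈ pathsA n i k) {m : ℕ} (hm1 : 1 ≤ m) (hm : m ≤ i) :
    1 ≤ entA p m := by
  by_contra h
  have h0 : entA p m ≤ 0 := by omega
  have := (entA_le_iff p (entA_exists hp hm)).1 h0
  rw [cA_zero] at this
  omega

lemma cA_entA (hp : p ∈ pathsA n i k) {m : ℕ} (hm1 : 1 ≤ m) (hm : m ≤ i) :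
    cA p (entA p m) = m := by
  have hmem : m ≤ cA p (entA p m) := Nat.sInf_mem (entA_exists hp hm)
  have hpos := entA_pos hp hm1 hm
  obtain ⟨a, ha⟩ : ∃ a, entA p m = a + 1 := ⟨entA p m - 1, by omega⟩
  have hlt : ¬ entA p m ≤ a := by omega
  rw [entA_le_iff p (entA_exists hp hm)] at hlt
  have := cA_succ p a
  rw [ha]
  rw [ha] at hmem
  split at this <;> omega

lemma dstep_entA (hp : p ∈ pathsA n i k) {m : ℕ} (hm1 : 1 ≤ m) (hm : m ≤ i) :
    dstep p (entA p m) := by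
  have hpos := entA_pos hp hm1 hm
  obtain ⟨a, ha⟩ : ∃ a, entA p m = a + 1 := ⟨entA p m - 1, by omega⟩
  have hlt : ¬ entA p m ≤ a := by omega
  rw [entA_le_iff p (entA_exists hp hm)] at hlt
  have hc := cA_entA hp hm1 hm
  rw [ha] at hc ⊢
  have := cA_succ p a
  by_contra hd
  simp [hd] at this
  omega

/-- `entA` recovers positions of down steps. -/
lemma entA_cA_of_dstep (hp : p ∈ pathsA n i k) {a : ℕ} (ha1 : 1 ≤ a) (ha : a ≤ n + 1)
    (hd : dstep p a) : entA p (cA p a) = a ∧ 1 ≤ cA p a ∧ cA p a ≤ i := by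
  obtain ⟨b, rfl⟩ : ∃ b, a = b + 1 := ⟨a - 1, by omega⟩
  have hc := cA_succ p b
  simp [hd] at hc
  have h1 : 1 ≤ cA p (b+1) := by omega
  have h2 : cA p (b+1) ≤ i := cA_le hp ha
  have hne := entA_exists hp h2
  refine ⟨le_antisymm ((entA_le_iff p hne).2 le_rfl) ?_, h1, h2⟩
  by_contra h
  have : entA p (cA p (b+1)) ≤ b := by omega
  rw [entA_le_iff p hne] at this
  omega

lemma entA_strictMono (hp : p ∈ pathsA n i k) {m m' : ℕ} (hm1 : 1 ≤ m) (hmm : m < m')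
    (hm' : m' ≤ i) : entA p m < entA p m' := by
  have hm : m ≤ i := by omega
  have h1 : entA p m ≤ entA p m' := by
    rw [entA_le_iff p (entA_exists hp hm)]
    rw [cA_entA hp (by omega) hm']
    omega
  rcases h1.lt_or_eq with h | h
  · exact h
  · exfalso
    have hc := cA_entA hp hm1 hm
    have hc' := cA_entA hp (by omega) hm'
    rw [h, hc'] at hc
    omega


lemma entA_inj (hp : p ∈ pathsA n i k) {m m' : ℕ} (hm1 : 1 ≤ m) (hmi : m ≤ i)
    (hm1' : 1 ≤ m') (hmi' : m' ≤ i) (h : entA p m = entA p m') : m = m' := by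
  have h1 := cA_entA hp hm1 hmi
  have h2 := cA_entA hp hm1' hmi'
  rw [h, h2] at h1
  exact h1.symm

lemma xcoord (hp : p ∈ pathsA n i k) {r : ℕ} (hr : r ≤ n + 1) : (pt p r).1 = (r : ℝ) :=
  hp.2.1 r (by omega)

lemma upper_char (hp : p ∈ pathsA n i k) (j : ℕ) (l : ℤ) :
    ((j, l) ∈ Cp (Setting.A n) p true) ↔
      ∃ m, 1 ≤ m ∧ m ≤ i ∧ entA p m = j ∧ entA p m ≤ n ∧ ¬ dstep p (entA p m + 1) ∧
        l = (i : ℤ) + k + j - 2 * m := by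
  constructor
  · rintro ⟨h1, h2, h3, h4, h5⟩
    dsimp only at h1 h2 h3 h4 h5
    simp only [if_pos] at h4 h5
    have hyj : (pt p j).2 = (l : ℝ) := by rw [h3]
    have hd : dstep p j := by simp only [dstep, hyj, h4]; ring
    have hnd : ¬ dstep p (j + 1) := by
      simp only [dstep, Nat.add_sub_cancel, h5, hyj]
      intro hcon; norm_num at hcon
    obtain ⟨he, hc1, hc2⟩ := entA_cA_of_dstep hp h1 (by omega) hd
    refine ⟨cA p j, hc1, hc2, he, by omega, by rw [he]; exact hnd, ?_⟩
    have := yv_eq hp j (by omega)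
    rw [hyj] at this
    exact_mod_cast this
  · rintro ⟨m, hm1, hmi, hje, hjn, hnd, hl⟩
    have hpos : 1 ≤ j := hje ▸ entA_pos hp hm1 hmi
    have hd : dstep p j := hje ▸ dstep_entA hp hm1 hmi
    have hc : cA p j = m := hje ▸ cA_entA hp hm1 hmi
    have hyj : (pt p j).2 = (l : ℝ) := by
      rw [yv_eq hp j (by omega), hc, hl]; push_cast; ring
    have hnd' : ¬ dstep p (j + 1) := hje ▸ hnd
    refine ⟨hpos, by omega, ?_, ?_, ?_⟩
    · have := xcoord hp (show j ≤ n + 1 by omega)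
      exact Prod.ext this hyj
    · simp only [if_pos]
      have := hd
      simp only [dstep] at this
      rw [hyj] at this
      linarith
    · simp only [if_pos]
      rw [not_dstep_up hp (by omega : j ≤ n) hnd', hyj]
  
lemma lower_char (hp : p ∈ pathsA n i k) (j : ℕ) (l : ℤ) :
    ((j, l) ∈ Cp (Setting.A n) p false) ↔
      ∃ m, 1 ≤ m ∧ m ≤ i ∧ entA p m = j + 1 ∧ 2 ≤ entA p m ∧ ¬ dstep p (entA p m - 1) ∧
        l = (i : ℤ) + k + j + 2 - 2 * m := by
  constructor
  · rintro ⟨h1, h2, h3, h4, h5⟩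
    dsimp only at h1 h2 h3 h4 h5
    simp only [if_neg (by simp : ¬ (false = true))] at h4 h5
    have hyj : (pt p j).2 = (l : ℝ) := by rw [h3]
    have hnd : ¬ dstep p j := by
      simp only [dstep, hyj, h4]
      intro hcon; norm_num at hcon
    have hd : dstep p (j + 1) := by
      simp only [dstep, Nat.add_sub_cancel, h5, hyj]; ring
    obtain ⟨he, hc1, hc2⟩ := entA_cA_of_dstep hp (by omega) (by omega) hd
    have hcj : cA p (j + 1) = cA p j + 1 := by
      have := cA_succ p j; simp [hd] at this; omega
    refine ⟨cA p (j+1), hc1, hc2, he, by omega, ?_, ?_⟩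
    · rw [he, Nat.add_sub_cancel]; exact hnd
    · have := yv_eq hp j (by omega)
      rw [hyj] at this
      have hz : (l : ℤ) = (i : ℤ) + k + j - 2 * (cA p j) := by exact_mod_cast this
      omega
  · rintro ⟨m, hm1, hmi, hje, hj2, hnd, hl⟩
    have hle : entA p m ≤ n + 1 := entA_le hp hmi
    have hjn : j ≤ n := by omega
    have hpos : 1 ≤ j := by omega
    have hd : dstep p (j + 1) := hje ▸ dstep_entA hp hm1 hmi
    have hc : cA p (j + 1) = m := hje ▸ cA_entA hp hm1 hmi
    have hcj : cA p j = m - 1 := by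
      have := cA_succ p j; simp [hd] at this; omega
    have hnd' : ¬ dstep p j := by
      have : entA p m - 1 = j := by omega
      exact this ▸ hnd
    have hyj : (pt p j).2 = (l : ℝ) := by
      rw [yv_eq hp j (by omega), hcj, hl]
      have : ((m - 1 : ℕ) : ℝ) = (m : ℝ) - 1 := by
        have : (1:ℕ) ≤ m := hm1
        push_cast [Nat.cast_sub this]; ring
      rw [this]; push_cast; ring
    refine ⟨hpos, hjn, ?_, ?_, ?_⟩
    · exact Prod.ext (xcoord hp (by omega)) hyj
    · have hb : j - 1 + 1 = j := by omega
      have hup : (pt p (j - 1 + 1)).2 = (pt p (j - 1)).2 + 1 :=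
        not_dstep_up hp (by omega) (by rw [hb]; exact hnd')
      rw [hb, hyj] at hup
      simp only [if_neg (by simp : ¬ (false = true))]
      linarith
    · simp only [if_neg (by simp : ¬ (false = true))]
      rw [dstep_down hd, hyj]
      ring

lemma succ_entA (hp : p ∈ pathsA n i k) {m : ℕ} (hm1 : 1 ≤ m) (hmi : m ≤ i)
    (h1 : entA p m ≤ n) (h2 : dstep p (entA p m + 1)) :
    m + 1 ≤ i ∧ entA p (m + 1) = entA p m + 1 := by
  have hc : cA p (entA p m + 1) = m + 1 := by
    have := cA_succ p (entA p m); simp [h2] at this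
    rw [this, cA_entA hp hm1 hmi]
  obtain ⟨he, _, hle⟩ := entA_cA_of_dstep hp (by omega) (by omega) h2
  rw [hc] at he hle
  exact ⟨hle, he⟩

lemma pred_entA (hp : p ∈ pathsA n i k) {m : ℕ} (hm1 : 1 ≤ m) (hmi : m ≤ i)
    (h1 : 2 ≤ entA p m) (h2 : dstep p (entA p m - 1)) :
    2 ≤ m ∧ entA p (m - 1) = entA p m - 1 := by
  have hle : entA p m ≤ n + 1 := entA_le hp hmi
  obtain ⟨a, ha⟩ : ∃ a, entA p m = a + 1 := ⟨entA p m - 1, by omega⟩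
  have ha' : entA p m - 1 = a := by omega
  rw [ha'] at h2
  have hda : dstep p (a + 1) := ha ▸ dstep_entA hp hm1 hmi
  have hca : cA p (a + 1) = cA p a + 1 := by
    have := cA_succ p a; simp [hda] at this; omega
  have hcm : cA p (a + 1) = m := ha ▸ cA_entA hp hm1 hmi
  have hcam : cA p a = m - 1 := by omega
  obtain ⟨he, hge, _⟩ := entA_cA_of_dstep hp (by omega) (by omega) h2
  rw [hcam] at he hge
  exact ⟨by omega, by omega⟩


lemma ind_pos {s : Prop} (h : s) : ind s = 1 := by simp [ind, h]

lemma ind_neg {s : Prop} (h : ¬ s) : ind s = 0 := by simp [ind, h]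

lemma Y_apply (a x : ℕ × ℤ) : Y a x = if x = a then 1 else 0 := rfl

open Classical in
lemma ind_upper (hp : p ∈ pathsA n i k) (x : ℕ × ℤ) :
    ind (x ∈ Cp (Setting.A n) p true) =
      ∑ m ∈ Finset.Icc 1 i, (if entA p m ≤ n ∧ ¬ dstep p (entA p m + 1) then
        Y (entA p m, (i : ℤ) + k + (entA p m : ℤ) - 2 * m) x else 0) := by
  obtain ⟨j, l⟩ := x
  by_cases hx : (j, l) ∈ Cp (Setting.A n) p true
  · obtain ⟨m0, hm01, hm0i, hje, hjn, hnd, hl⟩ := (upper_char hp j l).1 hx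
    rw [ind_pos hx, Finset.sum_eq_single m0]
    · rw [if_pos ⟨hjn, hnd⟩, Y_apply, if_pos (by rw [hje, hl])]
    · intro m hm hne
      rw [Finset.mem_Icc] at hm
      split
      · rw [Y_apply, if_neg]
        intro heq
        have h1 : j = entA p m := congrArg Prod.fst heq
        exact hne (entA_inj hp hm.1 hm.2 hm01 hm0i (by omega))
      · rfl
    · intro h
      exact absurd (Finset.mem_Icc.2 ⟨hm01, hm0i⟩) h
  · rw [ind_neg hx]
    symm
    apply Finset.sum_eq_zero
    intro m hm
    rw [Finset.mem_Icc] at hm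
    split
    · rename_i hcond
      rw [Y_apply, if_neg]
      intro heq
      have h1 : j = entA p m := congrArg Prod.fst heq
      have h2 : l = (i : ℤ) + k + (entA p m : ℤ) - 2 * m := congrArg Prod.snd heq
      exact hx ((upper_char hp j l).2 ⟨m, hm.1, hm.2, h1.symm, hcond.1, hcond.2, h1 ▸ h2⟩)
    · rfl

open Classical in
lemma ind_lower (hp : p ∈ pathsA n i k) (x : ℕ × ℤ) :
    ind (x ∈ Cp (Setting.A n) p false) =
      ∑ m ∈ Finset.Icc 1 i, (if 2 ≤ entA p m ∧ ¬ dstep p (entA p m - 1) then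
        Y (entA p m - 1, (i : ℤ) + k + (entA p m : ℤ) + 1 - 2 * m) x else 0) := by
  obtain ⟨j, l⟩ := x
  have hlval : ∀ m, 1 ≤ m → m ≤ i → 2 ≤ entA p m → j = entA p m - 1 →
      ((i : ℤ) + k + (entA p m : ℤ) + 1 - 2 * m = (i : ℤ) + k + j + 2 - 2 * m) := by
    intro m _ _ h2 hj
    have : (j : ℤ) = (entA p m : ℤ) - 1 := by omega
    omega
  by_cases hx : (j, l) ∈ Cp (Setting.A n) p false
  · obtain ⟨m0, hm01, hm0i, hje, hj2, hnd, hl⟩ := (lower_char hp j l).1 hx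
    have hjm : j = entA p m0 - 1 := by omega
    rw [ind_pos hx, Finset.sum_eq_single m0]
    · rw [if_pos ⟨hj2, hnd⟩, Y_apply, if_pos]
      rw [hjm, hl, hlval m0 hm01 hm0i hj2 hjm]
    · intro m hm hne
      rw [Finset.mem_Icc] at hm
      split
      · rename_i hcond
        rw [Y_apply, if_neg]
        intro heq
        have h1 : j = entA p m - 1 := congrArg Prod.fst heq
        have : entA p m = entA p m0 := by omega
        exact hne (entA_inj hp hm.1 hm.2 hm01 hm0i this)
      · rfl
    · intro h
      exact absurd (Finset.mem_Icc.2 ⟨hm01, hm0i⟩) h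
  · rw [ind_neg hx]
    symm
    apply Finset.sum_eq_zero
    intro m hm
    rw [Finset.mem_Icc] at hm
    split
    · rename_i hcond
      rw [Y_apply, if_neg]
      intro heq
      have h1 : j = entA p m - 1 := congrArg Prod.fst heq
      have h2 : l = (i : ℤ) + k + (entA p m : ℤ) + 1 - 2 * m := congrArg Prod.snd heq
      have hje : entA p m = j + 1 := by omega
      exact hx ((lower_char hp j l).2 ⟨m, hm.1, hm.2, hje, hcond.1, hcond.2,
        by rw [h2, hlval m hm.1 hm.2 hcond.1 h1]⟩)
    · rfl

open Classical in
lemma cross_sum (hp : p ∈ pathsA n i k) (x : ℕ × ℤ) :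
    (∑ m ∈ Finset.Icc 1 i, (if entA p m ≤ n ∧ dstep p (entA p m + 1) then
        Y (entA p m, (i : ℤ) + k + (entA p m : ℤ) - 2 * m) x else 0)) =
    ∑ m ∈ Finset.Icc 1 i, (if 2 ≤ entA p m ∧ dstep p (entA p m - 1) then
        Y (entA p m - 1, (i : ℤ) + k + (entA p m : ℤ) + 1 - 2 * m) x else 0) := by
  rw [← Finset.sum_filter, ← Finset.sum_filter]
  refine Finset.sum_bij' (fun m _ => m + 1) (fun m _ => m - 1) ?_ ?_ ?_ ?_ ?_
  · intro m hm
    simp only [Finset.mem_filter, Finset.mem_Icc] at hm ⊢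
    obtain ⟨⟨h1, h2⟩, h3, h4⟩ := hm
    obtain ⟨h5, h6⟩ := succ_entA hp h1 h2 h3 h4
    refine ⟨⟨by omega, h5⟩, ?_, ?_⟩
    · rw [h6]
      have := entA_pos hp h1 h2
      omega
    · rw [h6]
      have h7 : entA p m + 1 - 1 = entA p m := by omega
      rw [h7]
      exact dstep_entA hp h1 h2
  · intro m hm
    simp only [Finset.mem_filter, Finset.mem_Icc] at hm ⊢
    obtain ⟨⟨h1, h2⟩, h3, h4⟩ := hm
    obtain ⟨h5, h6⟩ := pred_entA hp h1 h2 h3 h4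
    refine ⟨⟨by omega, by omega⟩, ?_, ?_⟩
    · rw [h6]
      have := entA_le hp h2
      omega
    · rw [h6]
      have h7 : entA p m - 1 + 1 = entA p m := by omega
      rw [h7]
      exact dstep_entA hp h1 h2
  · intro m hm
    show m + 1 - 1 = m
    omega
  · intro m hm
    simp only [Finset.mem_filter, Finset.mem_Icc] at hm
    show m - 1 + 1 = m
    omega
  · intro m hm
    simp only [Finset.mem_filter, Finset.mem_Icc] at hm
    obtain ⟨⟨h1, h2⟩, h3, h4⟩ := hm
    obtain ⟨h5, h6⟩ := succ_entA hp h1 h2 h3 h4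
    show _ = Y (entA p (m + 1) - 1, (i : ℤ) + k + (entA p (m + 1) : ℤ) + 1 - 2 * ((m + 1 : ℕ) : ℤ)) x
    rw [h6]
    have h7 : entA p m + 1 - 1 = entA p m := by omega
    rw [h7]
    have h8 : (i : ℤ) + k + ((entA p m + 1 : ℕ) : ℤ) + 1 - 2 * (((m + 1 : ℕ)) : ℤ) =
        (i : ℤ) + k + ((entA p m : ℕ) : ℤ) - 2 * (m : ℤ) := by push_cast; ring
    rw [h8]

lemma mon_eq (hp : p ∈ pathsA n i k) :
    mon (Setting.A n) p =
      ∑ m ∈ Finset.Icc 1 i, boxA n (entA p m) ((k : ℤ) + (i : ℤ) + 1 - 2 * m) := by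
  classical
  funext x
  rw [Finset.sum_apply]
  have hbox : ∀ m ∈ Finset.Icc 1 i,
      boxA n (entA p m) ((k : ℤ) + (i : ℤ) + 1 - 2 * m) x =
      ((if entA p m ≤ n ∧ ¬ dstep p (entA p m + 1) then
          Y (entA p m, (i : ℤ) + k + (entA p m : ℤ) - 2 * m) x else 0)
        + (if entA p m ≤ n ∧ dstep p (entA p m + 1) then
          Y (entA p m, (i : ℤ) + k + (entA p m : ℤ) - 2 * m) x else 0))
      - ((if 2 ≤ entA p m ∧ ¬ dstep p (entA p m - 1) then
          Y (entA p m - 1, (i : ℤ) + k + (entA p m : ℤ) + 1 - 2 * m) x else 0)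
        + (if 2 ≤ entA p m ∧ dstep p (entA p m - 1) then
          Y (entA p m - 1, (i : ℤ) + k + (entA p m : ℤ) + 1 - 2 * m) x else 0)) := by
    intro m hm
    rw [Finset.mem_Icc] at hm
    have hle : entA p m ≤ n + 1 := entA_le hp hm.2
    have hpos : 1 ≤ entA p m := entA_pos hp hm.1 hm.2
    have e1 : ((entA p m : ℤ) - 1 + ((k : ℤ) + (i : ℤ) + 1 - 2 * m)) =
        (i : ℤ) + k + (entA p m : ℤ) - 2 * m := by ring
    have e2 : ((entA p m : ℤ) + ((k : ℤ) + (i : ℤ) + 1 - 2 * m)) =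
        (i : ℤ) + k + (entA p m : ℤ) + 1 - 2 * m := by ring
    rw [boxA, Pi.sub_apply]
    rw [e1, e2]
    by_cases hA : entA p m ≤ n
    · have hA' : ¬ (entA p m = n + 1) := by omega
      rw [if_neg hA']
      by_cases hB : 2 ≤ entA p m
      · have hB' : ¬ (entA p m = 1) := by omega
        rw [if_neg hB']
        by_cases hd1 : dstep p (entA p m + 1) <;> by_cases hd2 : dstep p (entA p m - 1) <;>
          simp [hA, hB, hd1, hd2] <;> ring
      · have hB' : entA p m = 1 := by omega
        rw [if_pos hB']
        by_cases hd1 : dstep p (entA p m + 1) <;>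
          simp [hA, hB, hd1, Pi.zero_apply] <;> ring
    · have hA' : entA p m = n + 1 := by omega
      rw [if_pos hA']
      by_cases hB : 2 ≤ entA p m
      · have hB' : ¬ (entA p m = 1) := by omega
        rw [if_neg hB']
        by_cases hd2 : dstep p (entA p m - 1) <;>
          simp [hA, hB, hd2, Pi.zero_apply] <;> ring
      · have hB' : entA p m = 1 := by omega
        rw [if_pos hB']
        simp [hA, hB, Pi.zero_apply]
  rw [Finset.sum_congr rfl hbox]
  rw [Finset.sum_sub_distrib, Finset.sum_add_distrib, Finset.sum_add_distrib]
  rw [← ind_upper hp x, ← ind_lower hp x, ← cross_sum hp x]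
  show mon (Setting.A n) p x = _
  rw [mon]
  ring


lemma pt_mem (hp : p ∈ pathsA n i k) {r : ℕ} (hr : r ≤ n + 1) : pt p r ∈ p := by
  have hl : r < p.length := by rw [hp.1]; omega
  rw [pt, List.getD_eq_getElem p _ hl]
  exact List.getElem_mem _

lemma mem_pt (hp : p ∈ pathsA n i k) {b : ℝ × ℝ} (hb : b ∈ p) :
    ∃ r, r ≤ n + 1 ∧ pt p r = b := by
  obtain ⟨r, hr, he⟩ := List.mem_iff_getElem.1 hb
  refine ⟨r, by rw [hp.1] at hr; omega, ?_⟩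
  rw [pt, List.getD_eq_getElem p _ hr, he]

end PathA

section PathA2

variable {n : ℕ} {i i' : ℕ} {k k' : ℤ} {p p' : List (ℝ × ℝ)}

lemma strictlyAbove_iff (hp : p ∈ pathsA n i k) (hp' : p' ∈ pathsA n i' k') :
    StrictlyAbove p p' ↔ ∀ a, a ≤ n + 1 → (pt p a).2 < (pt p' a).2 := by
  constructor
  · intro h a ha
    exact h _ (pt_mem hp ha) _ (pt_mem hp' ha) (by rw [xcoord hp ha, xcoord hp' ha])
  · intro h b hb c hc hx
    obtain ⟨r, hr, rfl⟩ := mem_pt hp hb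
    obtain ⟨u, hu, rfl⟩ := mem_pt hp' hc
    rw [xcoord hp hr, xcoord hp' hu] at hx
    have : r = u := Nat.cast_injective hx
    subst this
    exact h r hr

lemma path_ext (hp : p ∈ pathsA n i k) (hp' : p' ∈ pathsA n i k)
    (h : ∀ a, a ≤ n + 1 → cA p a = cA p' a) : p = p' := by
  apply List.ext_getElem (by rw [hp.1, hp'.1])
  intro r h1 h2
  have hr : r ≤ n + 1 := by rw [hp.1] at h1; omega
  have e1 : p[r] = pt p r := (List.getD_eq_getElem p _ h1).symm
  have e2 : p'[r] = pt p' r := (List.getD_eq_getElem p' _ h2).symm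
  rw [e1, e2]
  refine Prod.ext ?_ ?_
  · rw [xcoord hp hr, xcoord hp' hr]
  · rw [yv_eq hp r hr, yv_eq hp' r hr, h r hr]

lemma cA_eq_of_entA (hp : p ∈ pathsA n i k) (hp' : p' ∈ pathsA n i k)
    (h : ∀ m, 1 ≤ m → m ≤ i → entA p m = entA p' m) :
    ∀ a, a ≤ n + 1 → cA p a = cA p' a := by
  have key : ∀ q q' : List (ℝ × ℝ), q ∈ pathsA n i k → q' ∈ pathsA n i k →
      (∀ m, 1 ≤ m → m ≤ i → entA q m = entA q' m) → ∀ a, a ≤ n + 1 →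
        cA q a ≤ cA q' a := by
    intro q q' hq hq' he a ha
    rcases Nat.eq_zero_or_pos (cA q a) with h0 | h0
    · omega
    · have hle : cA q a ≤ i := cA_le hq ha
      have h1 : entA q (cA q a) ≤ a := (entA_le_iff q (entA_exists hq hle)).2 le_rfl
      rw [he _ h0 hle] at h1
      exact (entA_le_iff q' (entA_exists hq' hle)).1 h1
  intro a ha
  exact le_antisymm (key p p' hp hp' h a ha)
    (key p' p hp' hp (fun m h1 h2 => (h m h1 h2).symm) a ha)

lemma above_to_ent (hp : p ∈ pathsA n i k) (hp' : p' ∈ pathsA n i' k')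
    (hab : StrictlyAbove p p') {m m' : ℕ} (hm1 : 1 ≤ m) (hmi : m ≤ i) (hmi' : m' ≤ i')
    (hm1' : 1 ≤ m')
    (hrel : 2 * (m : ℤ) = 2 * (m' : ℤ) + 2 + (i : ℤ) + k - (i' : ℤ) - k') :
    entA p m ≤ entA p' m' := by
  set a := entA p' m' with ha
  have han : a ≤ n + 1 := entA_le hp' hmi'
  have hca' : cA p' a = m' := cA_entA hp' hm1' hmi'
  have hy := (strictlyAbove_iff hp hp').1 hab a han
  rw [yv_eq hp a han, yv_eq hp' a han, hca'] at hy
  have hz : (i : ℤ) + k + (a : ℤ) - 2 * (cA p a : ℤ) <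
      (i' : ℤ) + k' + (a : ℤ) - 2 * (m' : ℤ) := by exact_mod_cast hy
  exact (entA_le_iff p (entA_exists hp hmi)).2 (by omega)

lemma ent_to_above (hp : p ∈ pathsA n i k) (hp' : p' ∈ pathsA n i' k')
    (hodd : ((i : ℤ) - k) % 2 = 1) (hodd' : ((i' : ℤ) - k') % 2 = 1)
    (hsn : |(i' : ℤ) - (i : ℤ)| + 2 ≤ k' - k)
    (hent : ∀ m m' : ℕ, 1 ≤ m → m ≤ i → 1 ≤ m' → m' ≤ i' →
      2 * (m : ℤ) = 2 * (m' : ℤ) + 2 + (i : ℤ) + k - (i' : ℤ) - k' →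
      entA p m ≤ entA p' m') :
    StrictlyAbove p p' := by
  have habs1 : (i : ℤ) - (i' : ℤ) ≤ |(i' : ℤ) - (i : ℤ)| := by
    rw [abs_sub_comm]; exact le_abs_self _
  have habs2 : (i' : ℤ) - (i : ℤ) ≤ |(i' : ℤ) - (i : ℤ)| := le_abs_self _
  rw [strictlyAbove_iff hp hp']
  intro a ha
  rw [yv_eq hp a ha, yv_eq hp' a ha]
  suffices h : (i : ℤ) + k + (a : ℤ) - 2 * (cA p a : ℤ) <
      (i' : ℤ) + k' + (a : ℤ) - 2 * (cA p' a : ℤ) by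
    exact_mod_cast h
  set m' := cA p' a with hm'
  rcases Nat.eq_zero_or_pos m' with h0 | h0
  · omega
  · have hm'i : m' ≤ i' := cA_le hp' ha
    by_cases hbig : 2 ≤ 2 * (m' : ℤ) + 2 + (i : ℤ) + k - (i' : ℤ) - k'
    · obtain ⟨m, hm⟩ : ∃ m : ℕ,
          2 * (m : ℤ) = 2 * (m' : ℤ) + 2 + (i : ℤ) + k - (i' : ℤ) - k' :=
        ⟨((2 * (m' : ℤ) + 2 + (i : ℤ) + k - (i' : ℤ) - k') / 2).toNat, by omega⟩
      have hm1 : 1 ≤ m := by omega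
      have hmi : m ≤ i := by omega
      have h1 := hent m m' hm1 hmi h0 hm'i hm
      have h2 : entA p' m' ≤ a := (entA_le_iff p' (entA_exists hp' hm'i)).2 le_rfl
      have h4 : m ≤ cA p a := (entA_le_iff p (entA_exists hp hmi)).1 (le_trans h1 h2)
      omega
    · omega

lemma above_trans {p'' : List (ℝ × ℝ)} {i'' : ℕ} {k'' : ℤ}
    (hp : p ∈ pathsA n i k) (hp' : p' ∈ pathsA n i' k') (hp'' : p'' ∈ pathsA n i'' k'')
    (ha : StrictlyAbove p p') (hb : StrictlyAbove p' p'') : StrictlyAbove p p'' := by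
  rw [strictlyAbove_iff hp hp'']
  intro a haa
  exact lt_trans ((strictlyAbove_iff hp hp').1 ha a haa)
    ((strictlyAbove_iff hp' hp'').1 hb a haa)

end PathA2

section POf

open Classical in
/-- Number of prescribed down steps up to `a`. -/
noncomputable def cnt (i : ℕ) (d : ℕ → ℕ) (a : ℕ) : ℕ :=
  ((Finset.Icc 1 i).filter fun m => d m ≤ a).card

open Classical in
/-- The path with prescribed down steps. -/
noncomputable def pOf (n i : ℕ) (k : ℤ) (d : ℕ → ℕ) : List (ℝ × ℝ) :=
  (List.range (n + 2)).map fun (a : ℕ) =>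
    ((a : ℝ), (i : ℝ) + (k : ℝ) + (a : ℝ) - 2 * (cnt i d a : ℝ))

variable {n i : ℕ} {k : ℤ} {d : ℕ → ℕ}

lemma pOf_length : (pOf n i k d).length = n + 2 := by
  rw [pOf, List.length_map, List.length_range]

lemma pt_pOf {a : ℕ} (ha : a < n + 2) :
    pt (pOf n i k d) a = ((a : ℝ), (i : ℝ) + (k : ℝ) + (a : ℝ) - 2 * (cnt i d a : ℝ)) := by
  rw [pt, pOf]
  rw [List.getD_eq_getElem _ _ (by simpa using ha)]
  simp

variable (hd1 : ∀ m, 1 ≤ m → m ≤ i → 1 ≤ d m ∧ d m ≤ n + 1)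
variable (hdm : ∀ m m', 1 ≤ m → m < m' → m' ≤ i → d m < d m')

include hd1 in
lemma cnt_zero : cnt i d 0 = 0 := by
  classical
  rw [cnt, Finset.card_eq_zero, Finset.filter_eq_empty_iff]
  intro m hm
  rw [Finset.mem_Icc] at hm
  have := hd1 m hm.1 hm.2
  omega

include hd1 in
lemma cnt_last : cnt i d (n + 1) = i := by
  classical
  rw [cnt, Finset.filter_true_of_mem, Nat.card_Icc]
  · omega
  · intro m hm
    rw [Finset.mem_Icc] at hm
    exact (hd1 m hm.1 hm.2).2

lemma cnt_mono {a b : ℕ} (h : a ≤ b) : cnt i d a ≤ cnt i d b := by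
  classical
  apply Finset.card_le_card
  intro m hm
  rw [Finset.mem_filter] at hm ⊢
  exact ⟨hm.1, le_trans hm.2 h⟩

include hdm in
lemma cnt_step (a : ℕ) : cnt i d (a + 1) ≤ cnt i d a + 1 := by
  classical
  have hinj : ∀ m m', 1 ≤ m → m ≤ i → 1 ≤ m' → m' ≤ i → d m = d m' → m = m' := by
    intro m m' h1 h2 h3 h4 he
    rcases lt_trichotomy m m' with h | h | h
    · exact absurd (hdm m m' h1 h h4) (by omega)
    · exact h
    · exact absurd (hdm m' m h3 h h2) (by omega)
  by_cases hex : ∃ m0, (1 ≤ m0 ∧ m0 ≤ i) ∧ d m0 = a + 1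
  · obtain ⟨m0, hm0, hdm0⟩ := hex
    have hsub : (Finset.Icc 1 i).filter (fun m => d m ≤ a + 1) ⊆
        insert m0 ((Finset.Icc 1 i).filter fun m => d m ≤ a) := by
      intro m hm
      rw [Finset.mem_filter, Finset.mem_Icc] at hm
      rcases Nat.lt_or_ge (d m) (a + 1) with h | h
      · apply Finset.mem_insert_of_mem
        rw [Finset.mem_filter, Finset.mem_Icc]
        exact ⟨hm.1, by omega⟩
      · have he : d m = d m0 := by omega
        have := hinj m m0 hm.1.1 hm.1.2 hm0.1 hm0.2 he
        rw [this]
        exact Finset.mem_insert_self _ _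
    have h2 := Finset.card_insert_le m0 ((Finset.Icc 1 i).filter fun m => d m ≤ a)
    have h3 := Finset.card_le_card hsub
    rw [cnt, cnt]
    omega
  · have hsub : (Finset.Icc 1 i).filter (fun m => d m ≤ a + 1) ⊆
        (Finset.Icc 1 i).filter fun m => d m ≤ a := by
      intro m hm
      rw [Finset.mem_filter, Finset.mem_Icc] at hm ⊢
      refine ⟨hm.1, ?_⟩
      rcases Nat.lt_or_ge (d m) (a + 1) with h | h
      · omega
      · exact absurd ⟨m, ⟨hm.1.1, hm.1.2⟩, by omega⟩ hex
    have h3 := Finset.card_le_card hsub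
    rw [cnt, cnt]
    omega

include hd1 hdm in
lemma pOf_mem : pOf n i k d ∈ pathsA n i k := by
  refine ⟨pOf_length, ?_, ?_, ?_, ?_⟩
  · intro r hr; rw [pt_pOf hr]
  · rw [pt_pOf (by omega)]
    dsimp only
    rw [cnt_zero hd1]
    push_cast
    ring
  · rw [pt_pOf (by omega)]
    dsimp only
    rw [cnt_last hd1]
    push_cast
    ring
  · intro r hr
    rw [pt_pOf (by omega), pt_pOf (by omega)]
    dsimp only
    have h1 : cnt i d r ≤ cnt i d (r + 1) := cnt_mono (by omega)
    have h2 := cnt_step hdm r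
    have hor : cnt i d (r + 1) = cnt i d r ∨ cnt i d (r + 1) = cnt i d r + 1 := by omega
    rcases hor with h | h
    · left; rw [h]; push_cast; ring
    · right; rw [h]; push_cast; ring

include hd1 hdm in
lemma cA_pOf {a : ℕ} (ha : a ≤ n + 1) : cA (pOf n i k d) a = cnt i d a := by
  have hp : pOf n i k d ∈ pathsA n i k := pOf_mem hd1 hdm
  have h1 := yv_eq hp a ha
  rw [pt_pOf (by omega)] at h1
  dsimp only at h1
  have h2 : (cA (pOf n i k d) a : ℝ) = (cnt i d a : ℝ) := by linarith
  exact_mod_cast h2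

include hd1 hdm in
lemma entA_pOf {m : ℕ} (hm1 : 1 ≤ m) (hmi : m ≤ i) : entA (pOf n i k d) m = d m := by
  classical
  have hp : pOf n i k d ∈ pathsA n i k := pOf_mem hd1 hdm
  have hdn := hd1 m hm1 hmi
  have hub : m ≤ cA (pOf n i k d) (d m) := by
    rw [cA_pOf hd1 hdm hdn.2]
    have hsub : Finset.Icc 1 m ⊆ (Finset.Icc 1 i).filter fun m' => d m' ≤ d m := by
      intro m' hm'
      rw [Finset.mem_Icc] at hm'
      rw [Finset.mem_filter, Finset.mem_Icc]
      refine ⟨⟨hm'.1, by omega⟩, ?_⟩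
      rcases eq_or_lt_of_le hm'.2 with h | h
      · rw [h]
      · exact le_of_lt (hdm m' m hm'.1 h hmi)
    have := Finset.card_le_card hsub
    rw [Nat.card_Icc] at this
    rw [cnt]
    omega
  have hlb : ∀ b, b < d m → ¬ (m ≤ cA (pOf n i k d) b) := by
    intro b hb
    rw [cA_pOf hd1 hdm (by omega)]
    have hsub : (Finset.Icc 1 i).filter (fun m' => d m' ≤ b) ⊆ Finset.Icc 1 (m - 1) := by
      intro m' hm'
      rw [Finset.mem_filter, Finset.mem_Icc] at hm'
      rw [Finset.mem_Icc]
      refine ⟨hm'.1.1, ?_⟩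
      by_contra hcon
      have hmm : m ≤ m' := by omega
      rcases eq_or_lt_of_le hmm with h | h
      · rw [← h] at hm'; omega
      · have := hdm m m' hm1 h hm'.1.2
        omega
    have := Finset.card_le_card hsub
    rw [Nat.card_Icc] at this
    rw [cnt]
    omega
  apply le_antisymm
  · exact Nat.sInf_le hub
  · by_contra h
    push_neg at h
    exact hlb _ h (Nat.sInf_mem (entA_exists hp hmi))

end POf

section Diag

/-- Left end (row index of the top box) of column `t+1`. -/
def loB {T : ℕ} (w : Fin T → ℕ × ℤ) (t : Fin T) : ℤ :=
  (2 * ((t : ℤ) + 1) - (w t).2 - ((w t).1 : ℤ) + 1) / 2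

lemma two_loB {T : ℕ} {w : Fin T → ℕ × ℤ}
    (hpar : ∀ t, (((w t).1 : ℤ) - (w t).2) % 2 = 1) (t : Fin T) :
    2 * loB w t = 2 * ((t : ℤ) + 1) - (w t).2 - ((w t).1 : ℤ) + 1 := by
  have := hpar t
  rw [loB]
  omega

lemma mem_diag {n T : ℕ} {w : Fin T → ℕ × ℤ}
    (hpar : ∀ t, (((w t).1 : ℤ) - (w t).2) % 2 = 1) (s j : ℤ) :
    ((s, j) ∈ diagOf (Setting.A n) w) ↔
      ∃ t : Fin T, j = (t : ℤ) + 1 ∧ loB w t ≤ s ∧ s ≤ loB w t + ((w t).1 : ℤ) - 1 := by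
  have hrd : rd (Setting.A n) = 1 := rfl
  simp only [diagOf, Set.mem_setOf_eq, hrd]
  constructor
  · rintro ⟨t, h1, h2, h3⟩
    have hl := two_loB hpar t
    exact ⟨t, h1, by omega, by omega⟩
  · rintro ⟨t, h1, h2, h3⟩
    have hl := two_loB hpar t
    exact ⟨t, h1, by omega, by omega⟩

open Classical in
/-- The tableau attached to a tuple of paths. -/
noncomputable def tabOf {T : ℕ} (w : Fin T → ℕ × ℤ) (ps : Fin T → List (ℝ × ℝ)) :
    ℤ × ℤ → ℕ := fun q =>
  ∑ t : Fin T, if q.2 = (t : ℤ) + 1 ∧ loB w t ≤ q.1 ∧ q.1 ≤ loB w t + ((w t).1 : ℤ) - 1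
    then entA (ps t) ((q.1 - loB w t + 1).toNat) else 0

lemma tabOf_on {T : ℕ} (w : Fin T → ℕ × ℤ) (ps : Fin T → List (ℝ × ℝ)) (t : Fin T) (s : ℤ)
    (h2 : loB w t ≤ s) (h3 : s ≤ loB w t + ((w t).1 : ℤ) - 1) :
    tabOf w ps (s, (t : ℤ) + 1) = entA (ps t) ((s - loB w t + 1).toNat) := by
  classical
  rw [tabOf, Finset.sum_eq_single t]
  · exact if_pos ⟨rfl, h2, h3⟩
  · intro t' _ hne
    rw [if_neg]
    rintro ⟨he, -, -⟩
    dsimp only at he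
    refine hne (Fin.ext ?_)
    omega
  · intro h; exact absurd (Finset.mem_univ t) h

lemma tabOf_off {n T : ℕ} {w : Fin T → ℕ × ℤ}
    (hpar : ∀ t, (((w t).1 : ℤ) - (w t).2) % 2 = 1)
    (ps : Fin T → List (ℝ × ℝ)) {q : ℤ × ℤ} (hq : q ∉ diagOf (Setting.A n) w) :
    tabOf w ps q = 0 := by
  classical
  rw [tabOf]
  apply Finset.sum_eq_zero
  intro t _
  rw [if_neg]
  rintro ⟨h1, h2, h3⟩
  exact hq ((mem_diag hpar q.1 q.2).2 ⟨t, h1, h2, h3⟩)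

/-- The diagram as a finset. -/
noncomputable def DF {T : ℕ} (w : Fin T → ℕ × ℤ) : Finset (ℤ × ℤ) :=
  Finset.univ.biUnion fun t : Fin T =>
    (Finset.Icc (loB w t) (loB w t + ((w t).1 : ℤ) - 1)).image fun s => (s, (t : ℤ) + 1)

lemma coe_DF {n T : ℕ} {w : Fin T → ℕ × ℤ}
    (hpar : ∀ t, (((w t).1 : ℤ) - (w t).2) % 2 = 1) :
    diagOf (Setting.A n) w = ↑(DF w) := by
  ext q
  obtain ⟨s, j⟩ := q
  rw [mem_diag hpar s j, Finset.mem_coe, DF, Finset.mem_biUnion]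
  constructor
  · rintro ⟨t, h1, h2, h3⟩
    exact ⟨t, Finset.mem_univ t,
      Finset.mem_image.2 ⟨s, Finset.mem_Icc.2 ⟨h2, h3⟩, by rw [h1]⟩⟩
  · rintro ⟨t, -, hmem⟩
    obtain ⟨s', hs', he⟩ := Finset.mem_image.1 hmem
    rw [Finset.mem_Icc] at hs'
    have e1 : s' = s := congrArg Prod.fst he
    have e2 : (t : ℤ) + 1 = j := congrArg Prod.snd he
    subst e1
    exact ⟨t, e2.symm, hs'.1, hs'.2⟩

lemma sum_Icc_reindex {M : Type*} [AddCommMonoid M] (lo : ℤ) (i : ℕ) (F : ℤ → M) :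
    ∑ s ∈ Finset.Icc lo (lo + (i : ℤ) - 1), F s
      = ∑ m ∈ Finset.Icc 1 i, F (lo + (m : ℤ) - 1) := by
  refine Finset.sum_bij' (fun s _ => (s - lo + 1).toNat) (fun m _ => lo + (m : ℤ) - 1)
    ?_ ?_ ?_ ?_ ?_
  · intro a ha
    rw [Finset.mem_Icc] at ha
    try dsimp only
    rw [Finset.mem_Icc]
    omega
  · intro a ha
    rw [Finset.mem_Icc] at ha
    try dsimp only
    rw [Finset.mem_Icc]
    omega
  · intro a ha
    rw [Finset.mem_Icc] at ha
    try dsimp only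
    omega
  · intro a ha
    rw [Finset.mem_Icc] at ha
    try dsimp only
    omega
  · intro a ha
    rw [Finset.mem_Icc] at ha
    try dsimp only
    congr 1
    omega

lemma sum_DF {T : ℕ} (w : Fin T → ℕ × ℤ) {M : Type*} [AddCommMonoid M] (F : ℤ × ℤ → M) :
    ∑ q ∈ DF w, F q =
      ∑ t : Fin T, ∑ m ∈ Finset.Icc 1 (w t).1, F (loB w t + (m : ℤ) - 1, (t : ℤ) + 1) := by
  classical
  rw [DF, Finset.sum_biUnion]
  · apply Finset.sum_congr rfl
    intro t _
    rw [Finset.sum_image (fun a _ b _ h => by simpa using congrArg Prod.fst h)]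
    exact sum_Icc_reindex (loB w t) (w t).1 (fun s => F (s, (t : ℤ) + 1))
  · intro t _ t' _ hne
    simp only [Finset.disjoint_left]
    intro a ha ha'
    simp only [Finset.coe_image, Set.mem_image, Finset.mem_coe, Finset.mem_image] at ha ha'
    obtain ⟨s1, _, he1⟩ := ha
    obtain ⟨s2, _, he2⟩ := ha'
    have h1 : a.2 = (t : ℤ) + 1 := by rw [← he1]
    have h2 : a.2 = (t' : ℤ) + 1 := by rw [← he2]
    exact hne (by refine Fin.ext ?_; omega)

lemma nonoverlap_of_consec {n T : ℕ} {w : Fin T → ℕ × ℤ} {ps : Fin T → List (ℝ × ℝ)}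
    (hp : ∀ t, ps t ∈ pathsA n (w t).1 (w t).2)
    (hc : ∀ (a : ℕ) (h : a + 1 < T),
      StrictlyAbove (ps ⟨a, by omega⟩) (ps ⟨a + 1, h⟩)) :
    NonOverlapping ps := by
  have key : ∀ b (hb : b < T) a (hab : a < b),
      StrictlyAbove (ps ⟨a, by omega⟩) (ps ⟨b, hb⟩) := by
    intro b
    induction b with
    | zero => omega
    | succ c ih =>
      intro hb a hab
      rcases Nat.lt_or_ge a c with h | h
      · exact above_trans (hp _) (hp _) (hp _) (ih (by omega) a h) (hc c hb)
      · have : a = c := by omega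
        subst this
        exact hc a hb
  intro s t hst
  exact key t.val t.isLt s.val hst

end Diag

end A15


open A15 in
/-- type A: for a snake in type `A_N` with associated skew diagram `D`, there
is a bijection between the set `𝒫̄` of non-overlapping tuples of paths and the set of type A
skew tableaux of shape `D`, under which a tuple `(p_t)` corresponds to a tableau `𝒯` with
`∏_t m(p_t) = M(𝒯)`. -/
theorem stmt15 (n : ℕ) (hn : 1 ≤ n) {T : ℕ} (hT : 1 ≤ T)
    (w : Fin T → ℕ × ℤ) (hw : IsSnake (Setting.A n) w) :
    ∃ Φ : (Fin T → List (ℝ × ℝ)) → (ℤ × ℤ → ℕ),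
      Set.BijOn Φ (PBar (Setting.A n) w) (TabA n (diagOf (Setting.A n) w)) ∧
      ∀ ps ∈ PBar (Setting.A n) w,
        tmon (Setting.A n) ps = MtabA n (diagOf (Setting.A n) w) (Φ ps) := by
  classical
  have hXt : ∀ t : Fin T, 1 ≤ (w t).1 ∧ (w t).1 ≤ n ∧ (((w t).1 : ℤ) - (w t).2) % 2 = 1 :=
    fun t => hw.1 t
  have hpar : ∀ t : Fin T, (((w t).1 : ℤ) - (w t).2) % 2 = 1 := fun t => (hXt t).2.2
  have hsn : ∀ (t : Fin T) (h : (t : ℕ) + 1 < T),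
      |((w ⟨(t : ℕ) + 1, h⟩).1 : ℤ) - ((w t).1 : ℤ)| + 2 ≤
        (w ⟨(t : ℕ) + 1, h⟩).2 - (w t).2 :=
    fun t h => hw.2 t h
  refine ⟨tabOf w, ⟨?_, ?_, ?_⟩, ?_⟩
  · -- MapsTo
    intro ps hps
    have hp : ∀ t, ps t ∈ pathsA n (w t).1 (w t).2 := hps.1
    refine ⟨?_, ?_, ?_, ?_⟩
    · rintro ⟨s, j⟩ hq
      obtain ⟨t, rfl, h2, h3⟩ := (mem_diag hpar s j).1 hq
      rw [tabOf_on w ps t s h2 h3]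
      have hm1 : 1 ≤ (s - loB w t + 1).toNat := by omega
      have hmi : (s - loB w t + 1).toNat ≤ (w t).1 := by omega
      exact ⟨entA_pos (hp t) hm1 hmi, entA_le (hp t) hmi⟩
    · intro q hq
      exact tabOf_off hpar ps hq
    · intro s j hq hq'
      obtain ⟨t, he, h2, h3⟩ := (mem_diag hpar s j).1 hq
      obtain ⟨t', he', h2', h3'⟩ := (mem_diag hpar s (j + 1)).1 hq'
      subst he
      have htt : (t' : ℕ) = (t : ℕ) + 1 := by omega
      rw [tabOf_on w ps t s h2 h3]
      rw [show ((t : ℤ) + 1) + 1 = (t' : ℤ) + 1 by omega]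
      rw [tabOf_on w ps t' s h2' h3']
      have hl := two_loB hpar t
      have hl' := two_loB hpar t'
      apply above_to_ent (hp t) (hp t') (hps.2 t t' (by rw [Fin.lt_def]; omega))
        (by omega) (by omega) (by omega) (by omega)
      omega
    · intro s j hq hq'
      obtain ⟨t, he, h2, h3⟩ := (mem_diag hpar s j).1 hq
      obtain ⟨t2, he2, h22, h32⟩ := (mem_diag hpar (s + 1) j).1 hq'
      have ht2 : t2 = t := Fin.ext (by omega)
      subst ht2
      subst he
      rw [tabOf_on w ps t2 s h2 h3, tabOf_on w ps t2 (s + 1) h22 h32]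
      exact entA_strictMono (hp t2) (by omega) (by omega) (by omega)
  · -- InjOn
    intro ps hps ps' hps' hEq
    funext t
    apply path_ext (hps.1 t) (hps'.1 t)
    apply cA_eq_of_entA (hps.1 t) (hps'.1 t)
    intro m hm1 hmi
    have hb1 : loB w t ≤ loB w t + (m : ℤ) - 1 := by omega
    have hb2 : loB w t + (m : ℤ) - 1 ≤ loB w t + ((w t).1 : ℤ) - 1 := by omega
    have hidx : ((loB w t + (m : ℤ) - 1) - loB w t + 1).toNat = m := by omega
    have h1 := tabOf_on w ps t (loB w t + (m : ℤ) - 1) hb1 hb2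
    have h2 := tabOf_on w ps' t (loB w t + (m : ℤ) - 1) hb1 hb2
    rw [hidx] at h1 h2
    have h3 := congrFun hEq (loB w t + (m : ℤ) - 1, (t : ℤ) + 1)
    rw [h1, h2] at h3
    exact h3
  · -- SurjOn
    intro f hf
    obtain ⟨hf1, hf2, hf3, hf4⟩ := hf
    set d : Fin T → ℕ → ℕ := fun t m => f (loB w t + (m : ℤ) - 1, (t : ℤ) + 1) with hd
    have hmemD : ∀ (t : Fin T) (m : ℕ), 1 ≤ m → m ≤ (w t).1 →
        (loB w t + (m : ℤ) - 1, (t : ℤ) + 1) ∈ diagOf (Setting.A n) w := by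
      intro t m h1 h2
      exact (mem_diag hpar _ _).2 ⟨t, rfl, by omega, by omega⟩
    have hd1 : ∀ t : Fin T, ∀ m, 1 ≤ m → m ≤ (w t).1 → 1 ≤ d t m ∧ d t m ≤ n + 1 := by
      intro t m h1 h2
      exact hf1 _ (hmemD t m h1 h2)
    have hstep : ∀ t : Fin T, ∀ m, 1 ≤ m → m + 1 ≤ (w t).1 → d t m < d t (m + 1) := by
      intro t m h1 h2
      have hmem2 : ((loB w t + (m : ℤ) - 1) + 1, (t : ℤ) + 1) ∈ diagOf (Setting.A n) w := by
        have := hmemD t (m + 1) (by omega) h2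
        have he : loB w t + ((m + 1 : ℕ) : ℤ) - 1 = (loB w t + (m : ℤ) - 1) + 1 := by
          push_cast; ring
        rw [he] at this
        exact this
      have hcol := hf4 (loB w t + (m : ℤ) - 1) ((t : ℤ) + 1) (hmemD t m h1 (by omega)) hmem2
      rw [hd]
      dsimp only
      have he : (loB w t + (m : ℤ) - 1) + 1 = loB w t + ((m + 1 : ℕ) : ℤ) - 1 := by
        push_cast; ring
      rw [he] at hcol
      exact hcol
    have hdm : ∀ t : Fin T, ∀ m m', 1 ≤ m → m < m' → m' ≤ (w t).1 → d t m < d t m' := by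
      intro t m m' h1 h2 h3
      induction m' with
      | zero => omega
      | succ c ih =>
        rcases Nat.lt_or_ge m c with h | h
        · exact lt_trans (ih h (by omega)) (hstep t c (by omega) h3)
        · have : m = c := by omega
          subst this
          exact hstep t m h1 h3
    set ps : Fin T → List (ℝ × ℝ) := fun t => pOf n (w t).1 (w t).2 (d t) with hps
    have hp : ∀ t, ps t ∈ pathsA n (w t).1 (w t).2 := fun t => pOf_mem (hd1 t) (hdm t)
    have hent : ∀ t : Fin T, ∀ m, 1 ≤ m → m ≤ (w t).1 → entA (ps t) m = d t m :=
      fun t m h1 h2 => entA_pOf (hd1 t) (hdm t) h1 h2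
    have hNO : NonOverlapping ps := by
      apply nonoverlap_of_consec hp
      intro a h
      set t : Fin T := ⟨a, by omega⟩ with hta
      set t' : Fin T := ⟨a + 1, h⟩ with hta'
      have htt : (t' : ℕ) = (t : ℕ) + 1 := rfl
      apply ent_to_above (hp t) (hp t') (hpar t) (hpar t') (hsn t h)
      intro m m' hm1 hmi hm1' hmi' hrel
      rw [hent t m hm1 hmi, hent t' m' hm1' hmi']
      have hl := two_loB hpar t
      have hl' := two_loB hpar t'
      have hsrow : loB w t + (m : ℤ) - 1 = loB w t' + (m' : ℤ) - 1 := by omega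
      have hmem2 : (loB w t + (m : ℤ) - 1, ((t : ℤ) + 1) + 1) ∈ diagOf (Setting.A n) w := by
        have := hmemD t' m' hm1' hmi'
        rw [← hsrow] at this
        rw [show ((t' : ℤ)) + 1 = ((t : ℤ) + 1) + 1 from by omega] at this
        exact this
      have hrow := hf3 (loB w t + (m : ℤ) - 1) ((t : ℤ) + 1) (hmemD t m hm1 hmi) hmem2
      rw [hd]
      dsimp only
      rw [← hsrow, show ((t' : ℤ)) + 1 = ((t : ℤ) + 1) + 1 from by omega]
      exact hrow
    refine ⟨ps, ⟨hp, hNO⟩, ?_⟩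
    funext q
    by_cases hq : q ∈ diagOf (Setting.A n) w
    · obtain ⟨s, j⟩ := q
      obtain ⟨t, rfl, h2, h3⟩ := (mem_diag hpar s j).1 hq
      rw [tabOf_on w ps t s h2 h3]
      rw [hent t _ (by omega) (by omega)]
      rw [hd]
      dsimp only
      congr 2
      omega
    · rw [tabOf_off hpar ps hq, hf2 q hq]
  · -- monomials
    intro ps hps
    have hp : ∀ t, ps t ∈ pathsA n (w t).1 (w t).2 := hps.1
    rw [MtabA, coe_DF hpar, finsum_mem_coe_finset, sum_DF]
    rw [tmon]
    apply Finset.sum_congr rfl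
    intro t _
    rw [mon_eq (hp t)]
    apply Finset.sum_congr rfl
    intro m hm
    rw [Finset.mem_Icc] at hm
    have hb1 : loB w t ≤ loB w t + (m : ℤ) - 1 := by omega
    have hb2 : loB w t + (m : ℤ) - 1 ≤ loB w t + ((w t).1 : ℤ) - 1 := by omega
    have hidx : ((loB w t + (m : ℤ) - 1) - loB w t + 1).toNat = m := by omega
    rw [tabOf_on w ps t _ hb1 hb2, hidx]
    have hl := two_loB hpar t
    show boxA n (entA (ps t) m) ((w t).2 + ((w t).1 : ℤ) + 1 - 2 * (m : ℤ)) =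
      boxA n (entA (ps t) m) (2 * (((t : ℤ) + 1) - (loB w t + (m : ℤ) - 1)))
    rw [show 2 * (((t : ℤ) + 1) - (loB w t + (m : ℤ) - 1)) =
      (w t).2 + ((w t).1 : ℤ) + 1 - 2 * (m : ℤ) from by omega]

end Paper
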